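/- If an element w of a Coxeter group W admits a decomposition w = w_I · n_I where w_I ≠ 1 lies in a finite standard parabolic subgroup W_I and n_I normalizes W_I, then w is not logarithmic: there exists k ≥ 1 with ℓ(w^k) < k · ℓ(w). -/

import Mathlib

lemma aux_len_pow {B W : Type*} [Group W] {M : CoxeterMatrix B}
    (cs : CoxeterSystem M W) (w : W) (k : ℕ) :
    cs.length (w ^ k) ≤ k * cs.length w := by
  induction k with
  | zero => simp
  | succ k ih =>
    rw [pow_succ, add_mul, one_mul]
    exact le_trans (cs.length_mul_le _ _) (by omega)

/-- If an element `w` of a Coxeter group admits a reduced decomposition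
`w = w_I · n_I` with `w_I ≠ 1` lying in a finite standard parabolic subgroup `W_I`
and `n_I` normalizing `W_I`, then `w` is not logarithmic: there is `k ≥ 1` with
`ℓ(w^k) < k·ℓ(w)`. -/
theorem stmt_16 {B W : Type*} [Group W] {M : CoxeterMatrix B}
    (cs : CoxeterSystem M W) (I : Set B) (w wI nI : W)
    (hfin : Finite (Subgroup.closure (cs.simple '' I) : Subgroup W))
    (hwI : wI ∈ Subgroup.closure (cs.simple '' I)) (hwI1 : wI ≠ 1)
    (hnI : nI ∈ Subgroup.normalizer ((Subgroup.closure (cs.simple '' I) : Subgroup W) : Set W))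
    (hw : w = wI * nI)
    (hlen : cs.length w = cs.length wI + cs.length nI) :
    ∃ k : ℕ, 1 ≤ k ∧ cs.length (w ^ k) < k * cs.length w := by
  by_contra hcon
  push_neg at hcon
  set P := Subgroup.closure (cs.simple '' I) with hP
  have key : ∀ k : ℕ, w ^ k * (nI ^ k)⁻¹ ∈ P := by
    intro k
    induction k with
    | zero => simpa using one_mem P
    | succ k ih =>
      have h1 : nI ^ k ∈ Subgroup.normalizer (P : Set W) := pow_mem hnI k
      have h2 : nI ^ k * wI * (nI ^ k)⁻¹ ∈ P :=
        (Subgroup.mem_normalizer_iff.mp h1 wI).mp hwI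
      have heq : w ^ (k + 1) * (nI ^ (k + 1))⁻¹ =
          (w ^ k * (nI ^ k)⁻¹) * (nI ^ k * wI * (nI ^ k)⁻¹) := by
        rw [pow_succ, pow_succ, hw]
        group
      rw [heq]
      exact mul_mem ih h2
  obtain ⟨a, b, hab, hfab⟩ := Finite.exists_ne_map_eq_of_infinite
    (fun k : ℕ => (⟨w ^ k * (nI ^ k)⁻¹, key k⟩ : P))
  wlog hlt : a < b generalizing a b
  · exact this b a hab.symm hfab.symm (by omega)
  have hval : w ^ a * (nI ^ a)⁻¹ = w ^ b * (nI ^ b)⁻¹ := by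
    simpa using hfab
  set d := b - a with hd
  have hb : b = a + d := by omega
  have hwb2 : w ^ b = w ^ a * nI ^ d := by
    have h0 : w ^ a * (nI ^ a)⁻¹ * nI ^ b = w ^ b := by
      rw [hval]; simp [mul_assoc]
    rw [← h0, hb, pow_add]
    simp [mul_assoc]
  -- length bounds
  have h1 : cs.length (w ^ b) ≤ cs.length (w ^ a) + cs.length (nI ^ d) := by
    rw [hwb2]; exact cs.length_mul_le _ _
  have h2 : cs.length (w ^ a) ≤ a * cs.length w := aux_len_pow cs w a
  have h3 : cs.length (nI ^ d) ≤ d * cs.length nI := aux_len_pow cs nI d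
  have h4 : b * cs.length w ≤ cs.length (w ^ b) := hcon b (by omega)
  have h5 : cs.length wI ≠ 0 := fun h => hwI1 (cs.length_eq_zero_iff.mp h)
  have h6 : cs.length nI < cs.length w := by omega
  have hd1 : 1 ≤ d := by omega
  nlinarith [h1, h2, h3, h4, h6, hd1, hb]
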